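/- Let G be a bipartite Tanner graph drawn uniformly from the configuration-model ensemble with n variable nodes all of degree l ≥ 3 and m check nodes all of degree k. For any fixed integer E ≥ 1, the expected number of subsets of E variable nodes forming a stopping set (i.e., every check node adjacent to the subset has at least two edges into it) is O(n^{E - ⌈E·l/2⌉}) as n → ∞. -/

import Mathlib

open Finset

/-- In the configuration model with `n` variable nodes of degree `l` and check nodes of degree
`k`, a matching of the `n·l` variable stubs to the `n·l` check stubs is a permutation `σ` of
`Fin (n·l)`: variable stub `s` belongs to variable node `s/l` and is matched to check stub
`σ s`, belonging to check node `(σ s)/k`.  A set `S` of variable nodes is a stopping set if no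
check node has exactly one edge into `S`. -/
def IsStoppingSet (n l k : ℕ) (σ : Equiv.Perm (Fin (n * l))) (S : Finset ℕ) : Prop :=
  ∀ c ∈ Finset.range (n * l),
    ((Finset.univ : Finset (Fin (n * l))).filter
        (fun s => s.val / l ∈ S ∧ (σ s).val / k = c)).card ≠ 1

instance (n l k : ℕ) (σ : Equiv.Perm (Fin (n * l))) (S : Finset ℕ) :
    Decidable (IsStoppingSet n l k σ S) := by
  unfold IsStoppingSet; infer_instance

/-- The number of stopping sets of size `E` in the configuration `σ`. -/
def numStoppingSets (n l k E : ℕ) (σ : Equiv.Perm (Fin (n * l))) : ℕ :=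
  (((Finset.range n).powersetCard E).filter (fun S => IsStoppingSet n l k σ S)).card

/-- The expected number of stopping sets of size `E`, the matching `σ` being uniform. -/
noncomputable def expNumStoppingSets (n l k E : ℕ) : ℝ :=
  (∑ σ : Equiv.Perm (Fin (n * l)), (numStoppingSets n l k E σ : ℝ)) / (Nat.factorial (n * l))

/-- for a uniform configuration-model bipartite graph with `n` variable nodes of
degree `l ≥ 3` and `m = n·l/k` check nodes of degree `k`, and any fixed `E ≥ 1`, the expected
number of stopping sets consisting of `E` variable nodes is `O(n^{E − ⌈E·l/2⌉})` as `n → ∞`. -/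

lemma count_fix {N : ℕ} (A : Finset (Fin N)) :
    ((univ : Finset (Equiv.Perm (Fin N))).filter (fun π => ∀ a ∈ A, π a = a)).card
      = (N - A.card).factorial := by
  have h1 : ((univ : Finset (Equiv.Perm (Fin N))).filter (fun π => ∀ a ∈ A, π a = a)).card
      = Fintype.card {π : Equiv.Perm (Fin N) // ∀ a ∈ A, π a = a} := by
    rw [Fintype.card_subtype]
  rw [h1]
  have e : Equiv.Perm {x : Fin N // ¬ x ∈ A} ≃ {π : Equiv.Perm (Fin N) // ∀ a ∈ A, π a = a} := by
    refine (Equiv.Perm.subtypeEquivSubtypePerm (fun x => ¬ x ∈ A)).trans ?_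
    exact Equiv.subtypeEquivRight (fun π => by simp)
  rw [← Fintype.card_congr e, Fintype.card_perm, Fintype.card_subtype_compl,
    Fintype.card_coe, Fintype.card_fin]

lemma count_ext {N : ℕ} (A : Finset (Fin N)) (g : Fin N → Fin N) :
    ((univ : Finset (Equiv.Perm (Fin N))).filter (fun σ => ∀ a ∈ A, σ a = g a)).card
      ≤ (N - A.card).factorial := by
  set s := (univ : Finset (Equiv.Perm (Fin N))).filter (fun σ => ∀ a ∈ A, σ a = g a) with hs
  rcases s.eq_empty_or_nonempty with h | ⟨σ₀, hσ₀⟩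
  · simp [h]
  · rw [← count_fix A]
    apply Finset.card_le_card_of_injOn (fun σ => σ₀⁻¹ * σ)
    · intro σ hσ
      simp only [hs, Finset.mem_coe, mem_filter, mem_univ, true_and] at hσ hσ₀ ⊢
      intro a ha
      simp [Equiv.Perm.mul_apply, hσ a ha, ← hσ₀ a ha]
    · intro x _ y _ hxy
      simpa using congrArg (fun τ => σ₀ * τ) hxy

lemma count_maps_into {N : ℕ} (A B : Finset (Fin N)) :
    ((univ : Finset (Equiv.Perm (Fin N))).filter (fun σ => ∀ a ∈ A, σ a ∈ B)).card
      ≤ (N - A.card).factorial * B.card ^ A.card := by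
  classical
  set s := (univ : Finset (Equiv.Perm (Fin N))).filter (fun σ => ∀ a ∈ A, σ a ∈ B) with hs
  have maps : ∀ σ ∈ s, (fun a : {x // x ∈ A} => σ a.1) ∈ Fintype.piFinset (fun _ : {x // x ∈ A} => B) := by
    intro σ hσ
    rw [hs, mem_filter] at hσ
    rw [Fintype.mem_piFinset]
    exact fun a => hσ.2 a.1 a.2
  calc s.card ≤ (N - A.card).factorial * (Fintype.piFinset (fun _ : {x // x ∈ A} => B)).card :=
      Finset.card_le_mul_card_image_of_maps_to maps _ (by
        intro g _
        calc (s.filter (fun σ => (fun a : {x // x ∈ A} => σ a.1) = g)).card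
            ≤ ((univ : Finset (Equiv.Perm (Fin N))).filter
                (fun σ => ∀ a ∈ A, σ a = (fun x : Fin N =>
                  if h : x ∈ A then (g ⟨x, h⟩ : Fin N) else x) a)).card := by
              apply Finset.card_le_card
              intro σ hσ
              rw [mem_filter] at hσ ⊢
              refine ⟨mem_univ _, fun a ha => ?_⟩
              simp only [dif_pos ha]
              exact congrFun hσ.2 ⟨a, ha⟩
          _ ≤ (N - A.card).factorial := count_ext A _)
    _ = (N - A.card).factorial * B.card ^ A.card := by
        rw [Fintype.card_piFinset]
        simp [Fintype.card_coe]

lemma card_stubs {n l : ℕ} (hl : 0 < l) (S : Finset ℕ) (hS : S ⊆ range n) :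
    ((univ : Finset (Fin (n * l))).filter (fun s => s.val / l ∈ S)).card = S.card * l := by
  rw [show S.card * l = (S ×ˢ range l).card by rw [Finset.card_product, Finset.card_range]]
  apply Finset.card_bij' (fun s _ => (s.val / l, s.val % l))
      (fun p hp => (⟨p.1 * l + p.2, by
        rw [Finset.mem_product, Finset.mem_range] at hp
        have h1 : p.1 < n := Finset.mem_range.mp (hS hp.1)
        have h2 : p.1 * l + p.2 < (p.1 + 1) * l := by rw [add_mul, one_mul]; omega
        exact lt_of_lt_of_le h2 (Nat.mul_le_mul_right l h1)⟩ : Fin (n * l)))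
  case hi =>
    intro s hs
    rw [mem_filter] at hs
    rw [Finset.mem_product, Finset.mem_range]
    exact ⟨hs.2, Nat.mod_lt _ hl⟩
  case hj =>
    intro p hp
    rw [Finset.mem_product, Finset.mem_range] at hp
    rw [mem_filter]
    refine ⟨mem_univ _, ?_⟩
    simp only []
    rw [Nat.add_div_of_dvd_right ⟨p.1, mul_comm _ _⟩, Nat.mul_div_cancel _ hl,
      Nat.div_eq_of_lt hp.2]
    simpa using hp.1
  case left_inv =>
    intro s hs
    apply Fin.ext
    simp only []
    rw [mul_comm]; exact Nat.div_add_mod _ l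
  case right_inv =>
    intro p hp
    rw [Finset.mem_product, Finset.mem_range] at hp
    simp only []
    rw [Nat.add_div_of_dvd_right ⟨p.1, mul_comm _ _⟩, Nat.mul_div_cancel _ hl,
      Nat.div_eq_of_lt hp.2, Nat.add_mod, Nat.mul_mod_left, Nat.mod_eq_of_lt hp.2]
    simp [Nat.mod_eq_of_lt hp.2]

lemma card_checkstubs {N k : ℕ} (hk : 0 < k) (T : Finset ℕ) :
    ((univ : Finset (Fin N)).filter (fun b => b.val / k ∈ T)).card ≤ T.card * k := by
  rw [show T.card * k = (T ×ˢ range k).card by rw [Finset.card_product, Finset.card_range]]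
  apply Finset.card_le_card_of_injOn (fun b => (b.val / k, b.val % k))
  · intro b hb
    rw [Finset.mem_coe, mem_filter] at hb
    rw [Finset.mem_coe, Finset.mem_product, Finset.mem_range]
    exact ⟨hb.2, Nat.mod_lt _ hk⟩
  · intro x _ y _ hxy
    simp only [Prod.mk.injEq] at hxy
    apply Fin.ext
    rw [← Nat.div_add_mod x.val k, ← Nat.div_add_mod y.val k, hxy.1, hxy.2]

lemma count_stopping {n l k E : ℕ} (hl : 3 ≤ l) (hk : 1 ≤ k) (hE : 1 ≤ E)
    (hdvd : k ∣ n * l) (hm : E * l / 2 ≤ n * l / k)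
    (S : Finset ℕ) (hScard : S.card = E) (hS : S ⊆ range n) :
    ((univ : Finset (Equiv.Perm (Fin (n * l)))).filter (fun σ => IsStoppingSet n l k σ S)).card
      ≤ (n * l / k) ^ (E * l / 2) *
        ((E * l / 2 * k) ^ (E * l) * (n * l - E * l).factorial) := by
  classical
  set F := E * l with hF
  set h := F / 2 with hh
  set m := n * l / k with hmdef
  set A := (univ : Finset (Fin (n * l))).filter (fun s => s.val / l ∈ S) with hA
  have hAcard : A.card = F := by rw [hA, card_stubs (by omega) S hS, hScard]
  have hmk : m * k = n * l := Nat.div_mul_cancel hdvd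
  -- every stopping σ lies in the union over T
  have hsub : ((univ : Finset (Equiv.Perm (Fin (n * l)))).filter
        (fun σ => IsStoppingSet n l k σ S)) ⊆
      ((range m).powersetCard h).biUnion (fun T =>
        (univ : Finset (Equiv.Perm (Fin (n * l)))).filter
          (fun σ => ∀ a ∈ A, σ a ∈ (univ : Finset (Fin (n * l))).filter
              (fun b => b.val / k ∈ T))) := by
    intro σ hσ
    rw [mem_filter] at hσ
    have hstop := hσ.2
    set T₀ := A.image (fun a => (σ a).val / k) with hT₀
    have hT₀sub : T₀ ⊆ range m := by
      intro c hc
      rw [hT₀, mem_image] at hc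
      obtain ⟨a, _, rfl⟩ := hc
      rw [mem_range]
      have hlt : ((σ a) : ℕ) < k * m := by rw [mul_comm k m, hmk]; exact (σ a).isLt
      exact Nat.div_lt_of_lt_mul hlt
    have hfib : ∀ c ∈ T₀, 2 ≤ (A.filter (fun a => (σ a).val / k = c)).card := by
      intro c hc
      have hc1 : (A.filter (fun a => (σ a).val / k = c)).Nonempty := by
        rw [hT₀, mem_image] at hc
        obtain ⟨a, ha, rfl⟩ := hc
        exact ⟨a, mem_filter.mpr ⟨ha, rfl⟩⟩
      have hcr : c ∈ range (n * l) := by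
        have := hT₀sub hc
        rw [mem_range] at this ⊢
        exact lt_of_lt_of_le this (Nat.div_le_self _ _)
      have hne := hstop c hcr
      have h1 : 1 ≤ ((univ : Finset (Fin (n * l))).filter
          (fun s => s.val / l ∈ S ∧ (σ s).val / k = c)).card := by
        apply Finset.card_pos.mpr
        obtain ⟨a, ha⟩ := hc1
        rw [hA, filter_filter] at ha
        exact ⟨a, ha⟩
      have h2 : (A.filter (fun a => (σ a).val / k = c)).card
          = ((univ : Finset (Fin (n * l))).filter
            (fun s => s.val / l ∈ S ∧ (σ s).val / k = c)).card := by
        rw [hA, filter_filter]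
      rw [h2]
      omega
    have hT₀card : T₀.card ≤ h := by
      have hsum : A.card = ∑ c ∈ T₀, (A.filter (fun a => (σ a).val / k = c)).card :=
        Finset.card_eq_sum_card_fiberwise (fun a ha => mem_image_of_mem _ ha)
      have : 2 * T₀.card ≤ F := by
        rw [← hAcard, hsum]
        calc 2 * T₀.card = ∑ _c ∈ T₀, 2 := by rw [Finset.sum_const, smul_eq_mul, mul_comm]
          _ ≤ _ := Finset.sum_le_sum hfib
      rw [hh]
      omega
    obtain ⟨T, hT₀T, hTsub, hTcard⟩ := Finset.exists_subsuperset_card_eq hT₀sub hT₀card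
      (by rwa [Finset.card_range])
    rw [mem_biUnion]
    refine ⟨T, Finset.mem_powersetCard.mpr ⟨hTsub, hTcard⟩, ?_⟩
    rw [mem_filter]
    refine ⟨mem_univ _, fun a ha => ?_⟩
    rw [mem_filter]
    exact ⟨mem_univ _, hT₀T (mem_image_of_mem _ ha)⟩
  calc ((univ : Finset (Equiv.Perm (Fin (n * l)))).filter
        (fun σ => IsStoppingSet n l k σ S)).card
      ≤ _ := Finset.card_le_card hsub
    _ ≤ ∑ T ∈ (range m).powersetCard h,
        ((univ : Finset (Equiv.Perm (Fin (n * l)))).filter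
          (fun σ => ∀ a ∈ A, σ a ∈ (univ : Finset (Fin (n * l))).filter
              (fun b => b.val / k ∈ T))).card := Finset.card_biUnion_le
    _ ≤ ∑ _T ∈ (range m).powersetCard h, (h * k) ^ F * (n * l - F).factorial := by
        apply Finset.sum_le_sum
        intro T hT
        rw [Finset.mem_powersetCard] at hT
        calc _ ≤ (n * l - A.card).factorial *
              ((univ : Finset (Fin (n * l))).filter (fun b => b.val / k ∈ T)).card ^ A.card :=
            count_maps_into A _
          _ ≤ (h * k) ^ F * (n * l - F).factorial := by
            rw [hAcard, mul_comm]
            apply Nat.mul_le_mul_right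
            apply Nat.pow_le_pow_left
            calc _ ≤ T.card * k := card_checkstubs (by omega) T
              _ = h * k := by rw [hT.2]
    _ ≤ m ^ h * ((h * k) ^ F * (n * l - F).factorial) := by
        rw [Finset.sum_const, smul_eq_mul, Finset.card_powersetCard, Finset.card_range]
        exact Nat.mul_le_mul_right _ (Nat.choose_le_pow m h)

theorem expected_stopping_sets_bigO
    (l k E : ℕ) (hl : 3 ≤ l) (hk : 1 ≤ k) (hE : 1 ≤ E) :
    ∃ C : ℝ, 0 < C ∧ ∃ N : ℕ, ∀ n : ℕ, N ≤ n → k ∣ n * l →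
      expNumStoppingSets n l k E ≤
        C * (n : ℝ) ^ ((E : ℝ) - (Nat.ceil ((E * l : ℝ) / 2) : ℝ)) := by
  classical
  set F := E * l with hF
  set h := F / 2 with hh
  have hF3 : 3 ≤ F := le_trans hl (by calc l = 1 * l := (one_mul l).symm
    _ ≤ E * l := Nat.mul_le_mul_right l hE)
  have hhF : h ≤ F := Nat.div_le_self _ _
  have hh1 : 1 ≤ h := by omega
  refine ⟨(l : ℝ) ^ h * (2 * h * k : ℝ) ^ F, by positivity, k * F + F + 2, fun n hn hdvd => ?_⟩
  have hnF : F ≤ n := by nlinarith [Nat.one_le_iff_ne_zero.mpr (by omega : k ≠ 0)]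
  have hn1 : 1 ≤ n := by omega
  have hFnl : F ≤ n * l := le_trans hnF (Nat.le_mul_of_pos_right n (by omega))
  have h2Fnl : 2 * F ≤ n * l := by
    calc 2 * F ≤ F * 3 := by omega
      _ ≤ n * l := Nat.mul_le_mul hnF hl
  have hkF : k * F ≤ n := by omega
  have hm : F / 2 ≤ n * l / k := by
    rw [Nat.le_div_iff_mul_le (by omega)]
    calc h * k ≤ F * k := Nat.mul_le_mul_right k hhF
      _ = k * F := mul_comm _ _
      _ ≤ n := hkF
      _ ≤ n * l := Nat.le_mul_of_pos_right n (by omega)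
  -- ceiling computation
  have hceil : (Nat.ceil ((E * l : ℝ) / 2) : ℕ) = F - h := by
    have h1 : 2 * h ≤ F := by omega
    have h2 : F ≤ 2 * h + 1 := by omega
    rw [Nat.ceil_eq_iff (by omega : F - h ≠ 0)]
    have hc : ((F - h : ℕ) : ℝ) = (F : ℝ) - (h : ℝ) := by
      rw [Nat.cast_sub hhF]
    have hc2 : ((F - h - 1 : ℕ) : ℝ) = (F : ℝ) - (h : ℝ) - 1 := by
      rw [show F - h - 1 = F - (h + 1) by omega, Nat.cast_sub (by omega : h + 1 ≤ F)]
      push_cast; ring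
    have hEl : (E * l : ℝ) = (F : ℝ) := by rw [hF]; push_cast; ring
    have hr1 : (2 * h : ℝ) ≤ (F : ℝ) := by exact_mod_cast h1
    have hr2 : (F : ℝ) ≤ 2 * h + 1 := by exact_mod_cast h2
    have hhr : (1 : ℝ) ≤ (h : ℝ) := by exact_mod_cast hh1
    constructor
    · rw [hc2, hEl]; linarith
    · rw [hc, hEl]; linarith
  -- nat bound on the sum
  have hsum_nat : (∑ σ : Equiv.Perm (Fin (n * l)), numStoppingSets n l k E σ)
      ≤ n ^ E * ((n * l) ^ h * ((h * k) ^ F * (n * l - F).factorial)) := by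
    have hswap : (∑ σ : Equiv.Perm (Fin (n * l)), numStoppingSets n l k E σ)
        = ∑ S ∈ (range n).powersetCard E,
            ((univ : Finset (Equiv.Perm (Fin (n * l)))).filter
              (fun σ => IsStoppingSet n l k σ S)).card := by
      unfold numStoppingSets
      simp only [Finset.card_filter]
      rw [Finset.sum_comm]
    rw [hswap]
    calc _ ≤ ∑ _S ∈ (range n).powersetCard E,
          (n * l) ^ h * ((h * k) ^ F * (n * l - F).factorial) := by
          apply Finset.sum_le_sum
          intro S hS
          rw [Finset.mem_powersetCard] at hS
          calc _ ≤ (n * l / k) ^ h * ((h * k) ^ F * (n * l - F).factorial) :=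
              count_stopping hl hk hE hdvd hm S hS.2 hS.1
            _ ≤ (n * l) ^ h * ((h * k) ^ F * (n * l - F).factorial) :=
              Nat.mul_le_mul_right _ (Nat.pow_le_pow_left (Nat.div_le_self _ _) h)
      _ ≤ n ^ E * ((n * l) ^ h * ((h * k) ^ F * (n * l - F).factorial)) := by
          rw [Finset.sum_const, smul_eq_mul, Finset.card_powersetCard, Finset.card_range]
          exact Nat.mul_le_mul_right _ (Nat.choose_le_pow n E)
  -- pass to reals
  have hnl0 : (0 : ℝ) < ((n * l).factorial : ℝ) := by exact_mod_cast (n * l).factorial_pos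
  have hn0 : (0 : ℝ) < (n : ℝ) := by exact_mod_cast hn1
  have hexp : (n : ℝ) ^ ((E : ℝ) - ((Nat.ceil ((E * l : ℝ) / 2) : ℕ) : ℝ))
      = (n : ℝ) ^ (E + h) / (n : ℝ) ^ F := by
    rw [hceil]
    have hc : ((F - h : ℕ) : ℝ) = (F : ℝ) - (h : ℝ) := by
      push_cast [Nat.cast_sub hhF]; ring
    rw [hc, show (E : ℝ) - ((F : ℝ) - (h : ℝ)) = ((E + h : ℕ) : ℝ) - ((F : ℕ) : ℝ) by
      push_cast; ring, Real.rpow_sub hn0, Real.rpow_natCast, Real.rpow_natCast]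
  rw [hexp]
  -- key factorial identity and lower bound
  have hfact : ((n * l).factorial : ℝ)
      = ((n * l - F).factorial : ℝ) * ((n * l).descFactorial F : ℝ) := by
    exact_mod_cast congrArg (Nat.cast : ℕ → ℝ)
      (Nat.factorial_mul_descFactorial hFnl).symm
  have hdesc : ((n : ℝ) * l / 2) ^ F ≤ ((n * l).descFactorial F : ℝ) := by
    calc ((n : ℝ) * l / 2) ^ F ≤ ((n * l + 1 - F : ℕ) : ℝ) ^ F := by
          apply pow_le_pow_left₀ (by positivity)
          have hcast : ((n * l + 1 - F : ℕ) : ℝ) = (n * l : ℕ) + 1 - (F : ℝ) := by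
            push_cast [Nat.cast_sub (by omega : F ≤ n * l + 1)]; ring
          rw [hcast]
          have h1 : ((2 * F : ℕ) : ℝ) ≤ ((n * l : ℕ) : ℝ) := by exact_mod_cast h2Fnl
          push_cast at h1 ⊢
          linarith
      _ ≤ ((n * l).descFactorial F : ℝ) := by
          exact_mod_cast Nat.pow_sub_le_descFactorial (n * l) F
  -- chain of inequalities
  have hcast : (∑ σ : Equiv.Perm (Fin (n * l)), (numStoppingSets n l k E σ : ℝ))
      = ((∑ σ : Equiv.Perm (Fin (n * l)), numStoppingSets n l k E σ : ℕ) : ℝ) :=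
    (Nat.cast_sum _ _).symm
  have step1 : expNumStoppingSets n l k E
      ≤ ((n ^ E * ((n * l) ^ h * ((h * k) ^ F * (n * l - F).factorial)) : ℕ) : ℝ)
          / ((n * l).factorial : ℝ) := by
    unfold expNumStoppingSets
    rw [hcast]
    gcongr
  have hX0 : (0 : ℝ) ≤ (n : ℝ) ^ E * ((n : ℝ) * l) ^ h * ((h : ℝ) * k) ^ F := by positivity
  have hd0 : (0 : ℝ) < ((n : ℝ) * l / 2) ^ F := by positivity
  have hf0 : ((n * l - F).factorial : ℝ) ≠ 0 := by
    exact_mod_cast (n * l - F).factorial_pos.ne'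
  calc expNumStoppingSets n l k E
      ≤ ((n ^ E * ((n * l) ^ h * ((h * k) ^ F * (n * l - F).factorial)) : ℕ) : ℝ)
          / ((n * l).factorial : ℝ) := step1
    _ = ((n : ℝ) ^ E * ((n : ℝ) * l) ^ h * ((h : ℝ) * k) ^ F) * ((n * l - F).factorial : ℝ)
          / (((n * l).descFactorial F : ℝ) * ((n * l - F).factorial : ℝ)) := by
        rw [hfact]
        push_cast
        ring
    _ = ((n : ℝ) ^ E * ((n : ℝ) * l) ^ h * ((h : ℝ) * k) ^ F)
          / ((n * l).descFactorial F : ℝ) := mul_div_mul_right _ _ hf0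
    _ ≤ ((n : ℝ) ^ E * ((n : ℝ) * l) ^ h * ((h : ℝ) * k) ^ F) / ((n : ℝ) * l / 2) ^ F :=
        div_le_div_of_nonneg_left hX0 hd0 hdesc
    _ ≤ (l : ℝ) ^ h * (2 * h * k : ℝ) ^ F * ((n : ℝ) ^ (E + h) / (n : ℝ) ^ F) := by
        rw [mul_div_assoc' ((l : ℝ) ^ h * (2 * h * k : ℝ) ^ F) _ _,
          div_le_div_iff₀ hd0 (pow_pos hn0 F)]
        calc ((n : ℝ) ^ E * ((n : ℝ) * l) ^ h * ((h : ℝ) * k) ^ F) * (n : ℝ) ^ F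
            ≤ (((n : ℝ) ^ E * ((n : ℝ) * l) ^ h * ((h : ℝ) * k) ^ F) * (n : ℝ) ^ F)
                * (l : ℝ) ^ F := by
              apply le_mul_of_one_le_right (by positivity)
              apply one_le_pow₀
              exact_mod_cast le_trans (by norm_num) hl
          _ = (l : ℝ) ^ h * (2 * h * k : ℝ) ^ F * (n : ℝ) ^ (E + h) * ((n : ℝ) * l / 2) ^ F := by
              rw [div_pow]
              field_simp
              ring
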